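/- arXiv:0810.2318 — 2 statements merged into one kernel-verified Lean document; each statement's English description precedes it below -/
import Mathlib

section
/- Let M be a ℤ_p-module such that both M/pM and the p-torsion M[p] are finite. Then there exist submodules M₁ ⊆ M₂ ⊆ M such that M₁ is a torsion module of finite corank (i.e. its Pontryagin dual is a finitely generated ℤ_p-module), M₂/M₁ is uniquely p-divisible, and M/M₂ is a finitely generated ℤ_p-module. -/
open Submodule LinearMap

/-- The ℤ_p-module ℚ_p/ℤ_p. -/
abbrev QpModZp (p : ℕ) [Fact p.Prime] : Type :=
  ℚ_[p] ⧸ LinearMap.range (Algebra.linearMap ℤ_[p] ℚ_[p])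

section auxiliary



section aux
variable {p : ℕ} [Fact p.Prime]

lemma aux_pne : (p : ℤ_[p]) ≠ 0 := by
  exact_mod_cast (Fact.out : p.Prime).ne_zero

lemma aux_pmem : (p : ℤ_[p]) ∈ nonZeroDivisors ℤ_[p] :=
  mem_nonZeroDivisors_iff_ne_zero.mpr aux_pne

/-- torsion elements are killed by a power of p -/
lemma aux_torsion_pow {M : Type*} [AddCommGroup M] [Module ℤ_[p] M] {x : M}
    (hx : x ∈ Submodule.torsion ℤ_[p] M) : ∃ k : ℕ, (p : ℤ_[p]) ^ k • x = 0 := by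
  obtain ⟨a, ha⟩ := hx
  have ha' : (a : ℤ_[p]) • x = 0 := ha
  have hane : (a : ℤ_[p]) ≠ 0 := mem_nonZeroDivisors_iff_ne_zero.mp a.2
  set u := PadicInt.unitCoeff hane with hu
  refine ⟨PadicInt.valuation (a : ℤ_[p]), ?_⟩
  have key : (↑(u⁻¹) : ℤ_[p]) * (a : ℤ_[p]) = (p : ℤ_[p]) ^ PadicInt.valuation (a : ℤ_[p]) := by
    conv_lhs => rw [PadicInt.unitCoeff_spec hane]
    rw [← mul_assoc, ← hu, Units.inv_mul, one_mul]
  rw [← key, mul_smul, ha', smul_zero]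

/-- p•v torsion implies v torsion -/
lemma aux_torsion_of_smul {M : Type*} [AddCommGroup M] [Module ℤ_[p] M] {x : M}
    (hx : (p : ℤ_[p]) • x ∈ Submodule.torsion ℤ_[p] M) : x ∈ Submodule.torsion ℤ_[p] M := by
  obtain ⟨a, ha⟩ := hx
  have ha' : (a : ℤ_[p]) • (p : ℤ_[p]) • x = 0 := ha
  exact ⟨a * ⟨(p : ℤ_[p]), aux_pmem⟩, by
    show ((a : ℤ_[p]) * (p : ℤ_[p])) • x = 0
    rw [mul_smul]; exact ha'⟩

end aux

variable {p : ℕ} [Fact p.Prime]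

/-- Every submodule of a finite power of ℤ_p is closed. -/
lemma aux_submodule_closed {ι : Type} [Fintype ι] (K : Submodule ℤ_[p] (ι → ℤ_[p])) :
    IsClosed (K : Set (ι → ℤ_[p])) := by
  obtain ⟨s, hs⟩ := IsNoetherian.noetherian K
  let v : {a // a ∈ s} → (ι → ℤ_[p]) := fun i => (i : ι → ℤ_[p])
  let ψ := Fintype.linearCombination ℤ_[p] v
  have hrange : LinearMap.range ψ = K := by
    rw [Fintype.range_linearCombination]
    rw [Subtype.range_coe_subtype]
    rw [show {a | a ∈ s} = (s : Set (ι → ℤ_[p])) from Finset.setOf_mem]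
    exact hs
  have hcont : Continuous ψ := ψ.continuous_on_pi
  have : (K : Set (ι → ℤ_[p])) = Set.range ψ := by
    rw [← hrange]; rfl
  rw [this]
  exact (isCompact_range hcont).isClosed

/-- Compactness approximation lemma. -/
lemma aux_compact_approx {M : Type*} [AddCommGroup M] [Module ℤ_[p] M] {ι : Type} [Fintype ι]
    (φ : (ι → ℤ_[p]) →ₗ[ℤ_[p]] M) (N : ℕ → Submodule ℤ_[p] M)
    (hN : ∀ n, N (n + 1) ≤ N n) (x : M)
    (hx : ∀ n, ∃ c, x - φ c ∈ N n) : ∃ c, ∀ n, x - φ c ∈ N n := by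
  set C : ℕ → Set (ι → ℤ_[p]) := fun n => {c | x - φ c ∈ N n} with hC
  have hmem : ∀ n c, c ∈ C n ↔ x - φ c ∈ N n := fun n c => Iff.rfl
  have hclosed : ∀ n, IsClosed (C n) := by
    intro n
    obtain ⟨c₀, hc₀⟩ := hx n
    have : C n = (fun c => c - c₀) ⁻¹' (Submodule.comap φ (N n) : Set (ι → ℤ_[p])) := by
      ext c
      simp only [Set.mem_preimage, SetLike.mem_coe, Submodule.mem_comap, map_sub, hC,
        Set.mem_setOf_eq]
      constructor
      · intro h
        have := sub_mem hc₀ h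
        simpa using this
      · intro h
        have : x - φ c = (x - φ c₀) - (φ c - φ c₀) := by abel
        rw [this]
        exact sub_mem hc₀ h
    rw [this]
    exact (aux_submodule_closed _).preimage (continuous_id.sub continuous_const)
  have hanti : ∀ n, C (n + 1) ⊆ C n := fun n c hc => hN n hc
  have hne : ∀ n, (C n).Nonempty := fun n => (hx n).imp (fun c hc => hc)
  have h0 : IsCompact (C 0) := (hclosed 0).isCompact
  obtain ⟨c, hc⟩ := IsCompact.nonempty_iInter_of_sequence_nonempty_isCompact_isClosed
    C hanti hne h0 hclosed
  exact ⟨c, fun n => Set.mem_iInter.mp hc n⟩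


variable {p : ℕ} [Fact p.Prime]

lemma aux_qdiv (a : ℤ_[p]) (ha : a ≠ 0) (q : QpModZp p) : ∃ q', a • q' = q := by
  obtain ⟨x, rfl⟩ := Submodule.Quotient.mk_surjective _ q
  refine ⟨Submodule.Quotient.mk (((a : ℚ_[p]))⁻¹ * x), ?_⟩
  rw [← Submodule.Quotient.mk_smul]
  congr 1
  rw [Algebra.smul_def, PadicInt.algebraMap_apply, ← mul_assoc,
    mul_inv_cancel₀ (PadicInt.coe_ne_zero.mpr ha), one_mul]

lemma aux_qbaer : Module.Baer ℤ_[p] (QpModZp p) := by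
  intro I g
  obtain ⟨a, ha⟩ : ∃ a, I = Ideal.span {a} :=
    (IsPrincipalIdealRing.principal I).principal
  by_cases h0 : a = 0
  · refine ⟨0, fun x mem => ?_⟩
    have hx : x = 0 := by
      rw [ha, h0, Ideal.span_singleton_eq_bot.mpr rfl] at mem
      simpa using mem
    subst hx
    have : (⟨0, mem⟩ : I) = 0 := rfl
    rw [this]
    exact (map_zero g).symm
  · have hmem : a ∈ I := by rw [ha]; exact Ideal.mem_span_singleton_self a
    obtain ⟨q', hq'⟩ := aux_qdiv a h0 (g ⟨a, hmem⟩)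
    refine ⟨LinearMap.toSpanSingleton ℤ_[p] _ q', fun x mem => ?_⟩
    obtain ⟨c, hc⟩ := Ideal.mem_span_singleton'.mp (ha ▸ mem)
    have hsub : (⟨x, mem⟩ : I) = c • ⟨a, hmem⟩ := by
      apply Subtype.ext
      simp [← hc, smul_eq_mul]
    rw [hsub, map_smul, ← hq', LinearMap.toSpanSingleton_apply, ← hc,
      mul_smul, smul_comm]

/-- the map z ↦ z/p from ℤ_p to ℚ_p -/
noncomputable def auxW (p : ℕ) [Fact p.Prime] : ℤ_[p] →ₗ[ℤ_[p]] ℚ_[p] :=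
  (((p : ℚ_[p])⁻¹) • (LinearMap.id : ℚ_[p] →ₗ[ℚ_[p]] ℚ_[p])).restrictScalars ℤ_[p] ∘ₗ
    Algebra.linearMap ℤ_[p] ℚ_[p]

/-- the map z ↦ class of z/p from ℤ_p to ℚ_p/ℤ_p -/
noncomputable def auxU (p : ℕ) [Fact p.Prime] : ℤ_[p] →ₗ[ℤ_[p]] QpModZp p :=
  (LinearMap.range (Algebra.linearMap ℤ_[p] ℚ_[p])).mkQ ∘ₗ auxW p

set_option maxHeartbeats 1000000 in
lemma aux_qtor_finite :
    Finite (Submodule.torsionBy ℤ_[p] (QpModZp p) (p : ℤ_[p])) := by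
  classical
  set S := LinearMap.range (Algebra.linearMap ℤ_[p] ℚ_[p]) with hS
  set w := auxW p with hwdef
  set u := auxU p with hudef
  have hw : ∀ z : ℤ_[p], w z = (p : ℚ_[p])⁻¹ * (z : ℚ_[p]) := by
    intro z; simp [hwdef, auxW, smul_eq_mul]
  have hpQ : (p : ℚ_[p]) ≠ 0 := by
    exact_mod_cast (Fact.out : p.Prime).ne_zero
  -- torsionBy ≤ range u
  have hle : Submodule.torsionBy ℤ_[p] (QpModZp p) (p : ℤ_[p]) ≤ LinearMap.range u := by
    intro q hq
    obtain ⟨x, rfl⟩ := Submodule.Quotient.mk_surjective _ q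
    have : (p : ℤ_[p]) • (Submodule.Quotient.mk x : QpModZp p) = 0 :=
      (Submodule.mem_torsionBy_iff _ _).mp hq
    rw [← Submodule.Quotient.mk_smul, Submodule.Quotient.mk_eq_zero] at this
    obtain ⟨z, hz⟩ := this
    refine ⟨z, ?_⟩
    show S.mkQ (w z) = Submodule.Quotient.mk x
    rw [hw]
    have hz' : (z : ℚ_[p]) = (p : ℤ_[p]) • x := hz
    rw [hz']
    rw [Algebra.smul_def, PadicInt.algebraMap_apply]
    push_cast
    field_simp
    rfl
  -- span {p} ≤ ker u
  have hker : Ideal.span {(p : ℤ_[p])} ≤ LinearMap.ker u := by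
    rw [Ideal.span_le]
    intro z hz
    rw [Set.mem_singleton_iff] at hz
    subst hz
    show S.mkQ (w _) = 0
    rw [hw, Submodule.mkQ_apply, Submodule.Quotient.mk_eq_zero]
    refine ⟨1, ?_⟩
    simp [PadicInt.algebraMap_apply]
  -- ℤ_[p] ⧸ span {p} is finite
  have h1 : Finite (ℤ_[p] ⧸ (RingHom.ker (PadicInt.toZMod (p := p)))) :=
    Finite.of_injective _ (RingHom.kerLift_injective (PadicInt.toZMod (p := p)))
  have heq : (RingHom.ker (PadicInt.toZMod (p := p)) : Ideal ℤ_[p])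
      = Ideal.span {(p : ℤ_[p])} := by
    rw [PadicInt.ker_toZMod, PadicInt.maximalIdeal_eq_span_p]
  have h2 : Finite (ℤ_[p] ⧸ Ideal.span {(p : ℤ_[p])}) := by
    rw [← heq]; exact h1
  -- range u is finite
  haveI := h2
  haveI h4 : Finite (LinearMap.range u) := by
    have hker' : Ideal.span {(p : ℤ_[p])} ≤ LinearMap.ker u.rangeRestrict := by
      rw [LinearMap.ker_rangeRestrict]; exact hker
    have hsurj : Function.Surjective
        (Submodule.liftQ (Ideal.span {(p : ℤ_[p])}) u.rangeRestrict hker') := by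
      intro y
      obtain ⟨z, hz⟩ := u.surjective_rangeRestrict y
      exact ⟨Submodule.Quotient.mk z, by rw [Submodule.liftQ_apply]; exact hz⟩
    exact Finite.of_surjective _ hsurj
  exact Finite.of_injective (Submodule.inclusion hle) (Submodule.inclusion_injective hle)


/-- If f vanishes on the p-torsion, then f is divisible by p in the Hom module. -/
lemma aux_hom_div {T : Type} [AddCommGroup T] [Module ℤ_[p] T]
    (f : T →ₗ[ℤ_[p]] QpModZp p)
    (hf : ∀ x : T, (p : ℤ_[p]) • x = 0 → f x = 0) :
    ∃ g : T →ₗ[ℤ_[p]] QpModZp p, f = (p : ℤ_[p]) • g := by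
  set mulP : T →ₗ[ℤ_[p]] T := (p : ℤ_[p]) • (LinearMap.id : T →ₗ[ℤ_[p]] T) with hmulP
  have hle : LinearMap.ker mulP ≤ LinearMap.ker f := by
    intro x hx
    rw [LinearMap.mem_ker] at hx ⊢
    exact hf x hx
  set fbar := Submodule.liftQ (LinearMap.ker mulP) f hle with hfbar
  set e := mulP.quotKerEquivRange with he
  set f' := fbar ∘ₗ (e.symm : LinearMap.range mulP →ₗ[ℤ_[p]] T ⧸ LinearMap.ker mulP) with hf'
  obtain ⟨g, hg⟩ := aux_qbaer.extension_property (LinearMap.range mulP).subtype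
    (Submodule.injective_subtype _) f'
  refine ⟨g, ?_⟩
  ext t
  have hmem : mulP t ∈ LinearMap.range mulP := LinearMap.mem_range_self _ t
  have h1 : g ((p : ℤ_[p]) • t) = f' ⟨mulP t, hmem⟩ := by
    have := LinearMap.congr_fun hg ⟨mulP t, hmem⟩
    simpa [hmulP] using this
  have h2 : e (Submodule.Quotient.mk t) = ⟨mulP t, hmem⟩ := by
    apply Subtype.ext
    simp [he, LinearMap.quotKerEquivRange_apply_mk]
  have h3 : f' ⟨mulP t, hmem⟩ = f t := by
    rw [hf', LinearMap.comp_apply]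
    have hsy : e.symm ⟨mulP t, hmem⟩ = Submodule.Quotient.mk t := by
      rw [← h2, LinearEquiv.symm_apply_apply]
    show fbar (e.symm ⟨mulP t, hmem⟩) = f t
    rw [hsy]
    simp [hfbar]
  calc f t = g ((p : ℤ_[p]) • t) := by rw [h1, h3]
  _ = ((p : ℤ_[p]) • g) t := by simp



set_option maxHeartbeats 1000000 in
lemma aux_hom_finite {T : Type} [AddCommGroup T] [Module ℤ_[p] T]
    (hT : Module.IsTorsion ℤ_[p] T)
    (hTp : Finite (Submodule.torsionBy ℤ_[p] T (p : ℤ_[p]))) :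
    Module.Finite ℤ_[p] (T →ₗ[ℤ_[p]] QpModZp p) := by
  classical
  set A := Submodule.torsionBy ℤ_[p] T (p : ℤ_[p]) with hA
  let res : (T →ₗ[ℤ_[p]] QpModZp p) → (A →ₗ[ℤ_[p]] QpModZp p) := fun f => f ∘ₗ A.subtype
  -- V := A →ₗ Q is finite
  haveI hVfin : Finite (A →ₗ[ℤ_[p]] QpModZp p) := by
    haveI : Finite (Submodule.torsionBy ℤ_[p] (QpModZp p) (p : ℤ_[p])) := aux_qtor_finite
    haveI : Finite A := hTp
    let inj : (A →ₗ[ℤ_[p]] QpModZp p) →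
        (A → Submodule.torsionBy ℤ_[p] (QpModZp p) (p : ℤ_[p])) := fun f a =>
      ⟨f a, by
        rw [Submodule.mem_torsionBy_iff, ← map_smul]
        have : (p : ℤ_[p]) • a = 0 := by
          apply Subtype.ext
          show (p : ℤ_[p]) • (a : T) = 0
          exact (Submodule.mem_torsionBy_iff _ _).mp a.2
        rw [this, map_zero]⟩
    have hinj : Function.Injective inj := by
      intro f g h
      ext a
      have := congr_fun h a
      exact congr_arg Subtype.val this
    exact Finite.of_injective inj hinj
  haveI : Fintype (A →ₗ[ℤ_[p]] QpModZp p) := Fintype.ofFinite _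
  -- lift each element of V to H when possible
  let w : (A →ₗ[ℤ_[p]] QpModZp p) → (T →ₗ[ℤ_[p]] QpModZp p) := fun v =>
    if h : ∃ f, res f = v then h.choose else 0
  have hw : ∀ f, res (w (res f)) = res f := by
    intro f
    have h : ∃ f', res f' = res f := ⟨f, rfl⟩
    simp only [w, dif_pos h]
    exact h.choose_spec
  let φ := Fintype.linearCombination ℤ_[p] w
  have hφsingle : ∀ v, φ (Pi.single v 1) = w v := by
    intro v
    rw [Fintype.linearCombination_apply_single, one_smul]
  set N : ℕ → Submodule ℤ_[p] (T →ₗ[ℤ_[p]] QpModZp p) := fun n =>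
    LinearMap.range ((p : ℤ_[p]) ^ n •
      (LinearMap.id : (T →ₗ[ℤ_[p]] QpModZp p) →ₗ[ℤ_[p]] (T →ₗ[ℤ_[p]] QpModZp p))) with hN
  have hNmem : ∀ n h, h ∈ N n ↔ ∃ g, (p : ℤ_[p]) ^ n • g = h := by
    intro n h
    constructor
    · rintro ⟨g, hg⟩; exact ⟨g, hg⟩
    · rintro ⟨g, hg⟩; exact ⟨g, hg⟩
  -- one-step approximation
  have step1 : ∀ f : T →ₗ[ℤ_[p]] QpModZp p, ∃ c, f - φ c ∈ N 1 := by
    intro f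
    refine ⟨Pi.single (res f) 1, ?_⟩
    rw [hφsingle]
    have hvan : ∀ x : T, (p : ℤ_[p]) • x = 0 → (f - w (res f)) x = 0 := by
      intro x hx
      have hxA : x ∈ A := (Submodule.mem_torsionBy_iff _ _).mpr hx
      have h1 : f x = res f ⟨x, hxA⟩ := rfl
      have h2 : (w (res f)) x = res (w (res f)) ⟨x, hxA⟩ := rfl
      rw [LinearMap.sub_apply, h1, h2, hw]
      simp
    obtain ⟨g, hg⟩ := aux_hom_div _ hvan
    rw [hNmem]
    exact ⟨g, by rw [pow_one]; exact hg.symm⟩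
  -- full approximation by induction
  have happrox : ∀ (f : T →ₗ[ℤ_[p]] QpModZp p) (n : ℕ), ∃ c, f - φ c ∈ N n := by
    intro f n
    induction n with
    | zero =>
      refine ⟨0, ?_⟩
      rw [hNmem]
      exact ⟨f - φ 0, by rw [pow_zero, one_smul]⟩
    | succ n ih =>
      obtain ⟨c, hc⟩ := ih
      rw [hNmem] at hc
      obtain ⟨g, hg⟩ := hc
      obtain ⟨c', hc'⟩ := step1 g
      rw [hNmem] at hc'
      obtain ⟨h, hh⟩ := hc'
      refine ⟨c + (p : ℤ_[p]) ^ n • c', ?_⟩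
      rw [hNmem]
      refine ⟨h, ?_⟩
      rw [map_add, map_smul]
      calc (p : ℤ_[p]) ^ (n + 1) • h = (p : ℤ_[p]) ^ n • ((p : ℤ_[p]) ^ 1 • h) := by
            rw [smul_smul, ← pow_add]
      _ = (p : ℤ_[p]) ^ n • (g - φ c') := by rw [hh]
      _ = (p : ℤ_[p]) ^ n • g - (p : ℤ_[p]) ^ n • φ c' := by rw [smul_sub]
      _ = f - φ c - (p : ℤ_[p]) ^ n • φ c' := by rw [hg]
      _ = f - (φ c + (p : ℤ_[p]) ^ n • φ c') := by abel
  -- decreasing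
  have hNdec : ∀ n, N (n + 1) ≤ N n := by
    intro n h hmem
    rw [hNmem] at hmem ⊢
    obtain ⟨g, hg⟩ := hmem
    exact ⟨(p : ℤ_[p]) • g, by rw [smul_smul, ← pow_succ]; exact hg⟩
  -- surjectivity of φ
  have hsurj : Function.Surjective φ := by
    intro f
    obtain ⟨c, hc⟩ := aux_compact_approx φ N hNdec f (fun n => happrox f n)
    refine ⟨c, ?_⟩
    have : f - φ c = 0 := by
      ext t
      obtain ⟨k, hk⟩ := aux_torsion_pow ((Submodule.mem_torsion_iff t).mpr (@hT t))
      have := hc k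
      rw [hNmem] at this
      obtain ⟨g, hg⟩ := this
      rw [← hg]
      simp only [LinearMap.smul_apply, LinearMap.zero_apply]
      rw [← map_smul, hk, map_zero]
    have := sub_eq_zero.mp this
    exact this.symm
  exact Module.Finite.of_surjective φ hsurj


end auxiliary

set_option maxHeartbeats 1000000 in
/-- If M is a ℤ_p-module with M/pM and M[p] finite, then there are submodules
M₁ ⊆ M₂ ⊆ M with M₁ torsion of finite corank (its Pontryagin dual is a finitely generated
ℤ_p-module), M₂/M₁ uniquely p-divisible, and M/M₂ a finitely generated ℤ_p-module. -/
theorem stmt_9 (p : ℕ) [Fact p.Prime]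
    (M : Type) [AddCommGroup M] [Module ℤ_[p] M]
    (hquot : Finite (M ⧸ LinearMap.range ((p : ℤ_[p]) • (LinearMap.id : M →ₗ[ℤ_[p]] M))))
    (hker : Finite (Submodule.torsionBy ℤ_[p] M (p : ℤ_[p]))) :
    ∃ M₁ M₂ : Submodule ℤ_[p] M, M₁ ≤ M₂ ∧
      Module.IsTorsion ℤ_[p] M₁ ∧
      Module.Finite ℤ_[p] (M₁ →ₗ[ℤ_[p]] QpModZp p) ∧
      Function.Bijective
        (fun x : M₂ ⧸ Submodule.comap M₂.subtype M₁ => (p : ℤ_[p]) • x) ∧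
      Module.Finite ℤ_[p] (M ⧸ M₂) := by
  classical
  set T := Submodule.torsion ℤ_[p] M with hT
  set Pn : ℕ → Submodule ℤ_[p] M := fun n =>
    LinearMap.range ((p : ℤ_[p]) ^ n • (LinearMap.id : M →ₗ[ℤ_[p]] M)) with hPn
  have hPmem : ∀ (n : ℕ) (x : M), x ∈ Pn n ↔ ∃ y, (p : ℤ_[p]) ^ n • y = x := by
    intro n x
    constructor
    · rintro ⟨y, hy⟩; exact ⟨y, hy⟩
    · rintro ⟨y, hy⟩; exact ⟨y, hy⟩
  set M₂ := ⨅ n, (Pn n ⊔ T) with hM₂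
  have hM₂mem : ∀ x : M, x ∈ M₂ ↔ ∀ n, x ∈ Pn n ⊔ T := by
    intro x; rw [hM₂]; exact Submodule.mem_iInf _
  refine ⟨T, M₂, ?_, ?_, ?_, ?_, ?_⟩
  · -- T ≤ M₂
    exact le_iInf fun n => le_sup_right
  · -- torsion
    exact Submodule.torsion_isTorsion
  · -- finite dual
    apply aux_hom_finite Submodule.torsion_isTorsion
    let inj : Submodule.torsionBy ℤ_[p] T (p : ℤ_[p]) →
        Submodule.torsionBy ℤ_[p] M (p : ℤ_[p]) := fun x =>
      ⟨((x : T) : M), by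
        rw [Submodule.mem_torsionBy_iff]
        have hx : (p : ℤ_[p]) • (x : T) = 0 := (Submodule.mem_torsionBy_iff _ _).mp x.2
        have h2 := congr_arg Subtype.val hx
        exact h2⟩
    have hinj : Function.Injective inj := by
      intro a b h
      have h1 := congr_arg Subtype.val h
      exact Subtype.ext (Subtype.ext h1)
    exact Finite.of_injective inj hinj
  · -- bijective p-multiplication on M₂ / M₁
    constructor
    · -- injective
      intro a b hab
      have hz : ∀ z : M₂ ⧸ Submodule.comap M₂.subtype T, (p : ℤ_[p]) • z = 0 → z = 0 := by
        intro z hz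
        obtain ⟨w, rfl⟩ := Submodule.Quotient.mk_surjective _ z
        rw [← Submodule.Quotient.mk_smul, Submodule.Quotient.mk_eq_zero] at hz
        rw [Submodule.Quotient.mk_eq_zero]
        rw [Submodule.mem_comap] at hz ⊢
        have hz' : (p : ℤ_[p]) • (w : M) ∈ T := by
          have : (M₂.subtype) ((p : ℤ_[p]) • w) = (p : ℤ_[p]) • (w : M) := by simp
          rwa [this] at hz
        exact aux_torsion_of_smul hz'
      have h1 : (p : ℤ_[p]) • (a - b) = 0 := by
        rw [smul_sub]
        rw [sub_eq_zero]
        exact hab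
      have := hz _ h1
      exact sub_eq_zero.mp this
    · -- surjective
      intro z
      obtain ⟨w, rfl⟩ := Submodule.Quotient.mk_surjective _ z
      have hw2 : (w : M) ∈ M₂ := w.2
      rw [hM₂mem] at hw2
      have hdata : ∀ n : ℕ, ∃ (y t : M), t ∈ T ∧ (w : M) = (p : ℤ_[p]) ^ (n + 1) • y + t := by
        intro n
        obtain ⟨u, hu, t, ht, hsum⟩ := Submodule.mem_sup.mp (hw2 (n + 1))
        obtain ⟨y, hy⟩ := (hPmem _ _).mp hu
        exact ⟨y, t, ht, by rw [← hsum, hy]⟩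
      choose y t htT hsum using hdata
      have hy0 : (y 0) ∈ M₂ := by
        rw [hM₂mem]
        intro n
        have e0 : (p : ℤ_[p]) • y 0 = (w : M) - t 0 := by
          have := hsum 0
          rw [zero_add, pow_one] at this
          rw [this]; abel
        have en : (p : ℤ_[p]) • ((p : ℤ_[p]) ^ n • y n) = (w : M) - t n := by
          rw [smul_smul, ← pow_succ']
          have := hsum n
          rw [this]; abel
        have hdiff : (p : ℤ_[p]) • (y 0 - (p : ℤ_[p]) ^ n • y n) ∈ T := by
          have : (p : ℤ_[p]) • (y 0 - (p : ℤ_[p]) ^ n • y n) = t n - t 0 := by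
            rw [smul_sub, e0, en]; abel
          rw [this]
          exact sub_mem (htT n) (htT 0)
        have hdT : y 0 - (p : ℤ_[p]) ^ n • y n ∈ T := aux_torsion_of_smul hdiff
        have hexp : y 0 = (p : ℤ_[p]) ^ n • y n + (y 0 - (p : ℤ_[p]) ^ n • y n) := by abel
        rw [hexp]
        exact Submodule.add_mem_sup ((hPmem _ _).mpr ⟨y n, rfl⟩) hdT
      refine ⟨Submodule.Quotient.mk ⟨y 0, hy0⟩, ?_⟩
      show (p : ℤ_[p]) • (Submodule.Quotient.mk (⟨y 0, hy0⟩ : M₂) :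
        M₂ ⧸ Submodule.comap M₂.subtype T) = Submodule.Quotient.mk w
      rw [← Submodule.Quotient.mk_smul, Submodule.Quotient.eq]
      rw [Submodule.mem_comap]
      have hc : (M₂.subtype) ((p : ℤ_[p]) • (⟨y 0, hy0⟩ : M₂) - w)
          = (p : ℤ_[p]) • y 0 - (w : M) := by simp
      rw [hc]
      have : (p : ℤ_[p]) • y 0 - (w : M) = -(t 0) := by
        have := hsum 0
        rw [zero_add, pow_one] at this
        rw [this]; abel
      rw [this]
      exact neg_mem (htT 0)
  · -- M ⧸ M₂ finitely generated
    -- M/(pM + T) is finite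
    haveI hA' : Finite (M ⧸ (Pn 1 ⊔ T)) := by
      have hle : LinearMap.range ((p : ℤ_[p]) • (LinearMap.id : M →ₗ[ℤ_[p]] M)) ≤ Pn 1 ⊔ T := by
        intro x hx
        obtain ⟨z, hz⟩ := hx
        apply Submodule.mem_sup_left
        rw [hPmem]
        exact ⟨z, by rw [pow_one]; exact hz⟩
      have hsurj : Function.Surjective
          (Submodule.mapQ _ (Pn 1 ⊔ T) LinearMap.id hle) := by
        intro q
        obtain ⟨x, rfl⟩ := Submodule.Quotient.mk_surjective _ q
        exact ⟨Submodule.Quotient.mk x, by rw [Submodule.mapQ_apply]; rfl⟩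
      exact Finite.of_surjective _ hsurj
    haveI : Fintype (M ⧸ (Pn 1 ⊔ T)) := Fintype.ofFinite _
    let w : (M ⧸ (Pn 1 ⊔ T)) → M := fun a => (Submodule.Quotient.mk_surjective _ a).choose
    have hwspec : ∀ a, Submodule.Quotient.mk (w a) = a :=
      fun a => (Submodule.Quotient.mk_surjective _ a).choose_spec
    let φ := Fintype.linearCombination ℤ_[p] w
    have hφsingle : ∀ a, φ (Pi.single a 1) = w a := by
      intro a
      rw [Fintype.linearCombination_apply_single, one_smul]
    have step1 : ∀ x : M, ∃ c, x - φ c ∈ Pn 1 ⊔ T := by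
      intro x
      refine ⟨Pi.single (Submodule.Quotient.mk x) 1, ?_⟩
      rw [hφsingle]
      rw [← Submodule.Quotient.mk_eq_zero, Submodule.Quotient.mk_sub, hwspec, sub_self]
    have happrox : ∀ (x : M) (n : ℕ), ∃ c, x - φ c ∈ Pn n ⊔ T := by
      intro x n
      induction n with
      | zero =>
        refine ⟨0, Submodule.mem_sup_left ?_⟩
        rw [hPmem]
        exact ⟨x - φ 0, by rw [pow_zero, one_smul]⟩
      | succ n ih =>
        obtain ⟨c, hc⟩ := ih
        obtain ⟨u, hu, s, hs, hsum2⟩ := Submodule.mem_sup.mp hc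
        obtain ⟨yy, hyy⟩ := (hPmem _ _).mp hu
        obtain ⟨c', hc'⟩ := step1 yy
        obtain ⟨u1, hu1, s1, hs1, hsum1⟩ := Submodule.mem_sup.mp hc'
        obtain ⟨zz, hzz⟩ := (hPmem _ _).mp hu1
        refine ⟨c + (p : ℤ_[p]) ^ n • c', ?_⟩
        have hkey : x - φ (c + (p : ℤ_[p]) ^ n • c')
            = (p : ℤ_[p]) ^ (n + 1) • zz + ((p : ℤ_[p]) ^ n • s1 + s) := by
          rw [map_add, map_smul]
          have h1 : x - φ c = (p : ℤ_[p]) ^ n • yy + s := by rw [← hsum2, hyy]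
          have h2 : yy - φ c' = (p : ℤ_[p]) ^ 1 • zz + s1 := by rw [← hsum1, hzz]
          have h3 : x - (φ c + (p : ℤ_[p]) ^ n • φ c')
              = (x - φ c) - (p : ℤ_[p]) ^ n • φ c' := by abel
          rw [h3, h1]
          have h4 : (p : ℤ_[p]) ^ n • yy + s - (p : ℤ_[p]) ^ n • φ c'
              = (p : ℤ_[p]) ^ n • (yy - φ c') + s := by
            rw [smul_sub]; abel
          rw [h4, h2, smul_add, smul_smul, ← pow_add]
          abel
        rw [hkey]
        refine Submodule.add_mem_sup ((hPmem _ _).mpr ⟨zz, rfl⟩) ?_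
        exact add_mem (Submodule.smul_mem _ _ hs1) hs
    have hNdec : ∀ n, (Pn (n + 1) ⊔ T) ≤ (Pn n ⊔ T) := by
      intro n
      apply sup_le_sup_right
      intro x hx
      obtain ⟨yy, hyy⟩ := (hPmem _ _).mp hx
      rw [hPmem]
      exact ⟨(p : ℤ_[p]) • yy, by rw [smul_smul, ← pow_succ]; exact hyy⟩
    have hfin : ∀ x : M, ∃ c, x - φ c ∈ M₂ := by
      intro x
      obtain ⟨c, hc⟩ := aux_compact_approx φ (fun n => Pn n ⊔ T) hNdec x (happrox x)
      exact ⟨c, (hM₂mem _).mpr hc⟩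
    have hsurj : Function.Surjective (M₂.mkQ ∘ₗ φ) := by
      intro q
      obtain ⟨x, rfl⟩ := Submodule.Quotient.mk_surjective _ q
      obtain ⟨c, hc⟩ := hfin x
      refine ⟨c, ?_⟩
      show M₂.mkQ (φ c) = Submodule.Quotient.mk x
      rw [Submodule.mkQ_apply, ← sub_eq_zero, ← Submodule.Quotient.mk_sub,
        Submodule.Quotient.mk_eq_zero]
      have heq : φ c - x = -(x - φ c) := by abel
      rw [heq]
      exact Submodule.neg_mem _ hc
    exact Module.Finite.of_surjective _ hsurj
end

section
/- Let (A_n), (B_n), (C_n) be direct systems of ℤ_p-modules indexed by ℕ with a short exact sequence of systems 0 → A → B → C → 0, and suppose each B_n is a finitely generated ℤ_p-module. Then the system (B_n) stabilizes (all transition maps are isomorphisms from some index on) if and only if both (A_n) and (C_n) stabilize. -/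
/-- Given a levelwise short exact sequence 0 → A → B → C → 0 of direct
systems of ℤ_p-modules indexed by ℕ (with transition maps fA, fB, fC), with each B n
finitely generated over ℤ_p, the system B stabilizes iff both A and C stabilize. -/
theorem stmt_15 (p : ℕ) [Fact p.Prime]
    (A B C : ℕ → Type)
    [∀ n, AddCommGroup (A n)] [∀ n, Module ℤ_[p] (A n)]
    [∀ n, AddCommGroup (B n)] [∀ n, Module ℤ_[p] (B n)]
    [∀ n, AddCommGroup (C n)] [∀ n, Module ℤ_[p] (C n)]
    [∀ n, Module.Finite ℤ_[p] (B n)]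
    (fA : ∀ n, A n →ₗ[ℤ_[p]] A (n + 1))
    (fB : ∀ n, B n →ₗ[ℤ_[p]] B (n + 1))
    (fC : ∀ n, C n →ₗ[ℤ_[p]] C (n + 1))
    (ι : ∀ n, A n →ₗ[ℤ_[p]] B n) (π : ∀ n, B n →ₗ[ℤ_[p]] C n)
    (hcommι : ∀ n, (ι (n + 1)).comp (fA n) = (fB n).comp (ι n))
    (hcommπ : ∀ n, (π (n + 1)).comp (fB n) = (fC n).comp (π n))
    (hinj : ∀ n, Function.Injective (ι n))
    (hexact : ∀ n, LinearMap.range (ι n) = LinearMap.ker (π n))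
    (hsurj : ∀ n, Function.Surjective (π n)) :
    (∃ n₀, ∀ n ≥ n₀, Function.Bijective (fB n)) ↔
      ((∃ n₀, ∀ n ≥ n₀, Function.Bijective (fA n)) ∧
        (∃ n₀, ∀ n ≥ n₀, Function.Bijective (fC n))) := by
  have hι : ∀ n a, ι (n + 1) (fA n a) = fB n (ι n a) :=
    fun n => LinearMap.congr_fun (hcommι n)
  have hπ : ∀ n b, π (n + 1) (fB n b) = fC n (π n b) :=
    fun n => LinearMap.congr_fun (hcommπ n)
  have hπι : ∀ n a, π n (ι n a) = 0 := by
    intro n a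
    have : ι n a ∈ LinearMap.ker (π n) := (hexact n) ▸ LinearMap.mem_range_self _ a
    exact this
  constructor
  · rintro ⟨n₀, hB⟩
    haveI : IsNoetherian ℤ_[p] (B n₀) :=
      isNoetherian_of_isNoetherianRing_of_finite ℤ_[p] (B n₀)
    -- iterated transition maps starting at n₀
    let φ : (k : ℕ) → B n₀ →ₗ[ℤ_[p]] B (n₀ + k) := fun k =>
      Nat.rec LinearMap.id (fun k g => (fB (n₀ + k)).comp g) k
    have hφsucc : ∀ k x, φ (k + 1) x = fB (n₀ + k) (φ k x) := fun _ _ => rfl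
    have hφ : ∀ k, Function.Bijective (φ k) := by
      intro k
      induction k with
      | zero => exact Function.bijective_id
      | succ k ih => exact (hB (n₀ + k) (Nat.le_add_right _ _)).comp ih
    have hmono : Monotone (fun k => (LinearMap.range (ι (n₀ + k))).comap (φ k)) := by
      apply monotone_nat_of_le_succ
      intro k x hx
      rw [Submodule.mem_comap] at hx ⊢
      obtain ⟨a, ha⟩ := hx
      refine ⟨fA (n₀ + k) a, ?_⟩
      show ι (n₀ + k + 1) (fA (n₀ + k) a) = φ (k + 1) x
      rw [hι, ha, hφsucc]
    obtain ⟨n₁, hn₁⟩ := monotone_stabilizes_iff_noetherian.mpr inferInstance ⟨_, hmono⟩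
    have hAsurj : ∀ n ≥ n₀ + n₁, Function.Surjective (fA n) := by
      intro n hn a'
      obtain ⟨k, rfl⟩ : ∃ k, n = n₀ + k := ⟨n - n₀, by omega⟩
      have hk : n₁ ≤ k := by omega
      obtain ⟨x, hx⟩ := (hφ (k + 1)).2 (ι (n₀ + (k + 1)) a')
      have hx1 : x ∈ (LinearMap.range (ι (n₀ + (k + 1)))).comap (φ (k + 1)) := by
        rw [Submodule.mem_comap]; exact ⟨a', hx.symm⟩
      have hx2 : x ∈ (LinearMap.range (ι (n₀ + k))).comap (φ k) := by
        have e1 := hn₁ (k + 1) (by omega)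
        have e2 := hn₁ k hk
        simp only [OrderHom.coe_mk] at e1 e2
        rw [← e2, e1]; exact hx1
      rw [Submodule.mem_comap] at hx2
      obtain ⟨a, ha⟩ := hx2
      refine ⟨a, hinj (n₀ + k + 1) ?_⟩
      show ι (n₀ + k + 1) (fA (n₀ + k) a) = ι (n₀ + (k + 1)) a'
      rw [hι, ha]
      rw [hφsucc] at hx
      exact hx
    have hAinj : ∀ n ≥ n₀, Function.Injective (fA n) := by
      intro n hn a a' h
      apply hinj n
      apply (hB n hn).1
      rw [← hι, ← hι, h]
    refine ⟨⟨n₀ + n₁, fun n hn => ⟨hAinj n (by omega), hAsurj n hn⟩⟩,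
      ⟨n₀ + n₁, fun n hn => ⟨?_, ?_⟩⟩⟩
    · -- fC injective
      intro c c' h
      obtain ⟨b, rfl⟩ := hsurj n c
      obtain ⟨b', rfl⟩ := hsurj n c'
      rw [← hπ, ← hπ] at h
      -- π (n+1) (fB n b - fB n b') = 0
      have hker : fB n b - fB n b' ∈ LinearMap.ker (π (n + 1)) := by
        rw [LinearMap.mem_ker, map_sub, h, sub_self]
      rw [← hexact] at hker
      obtain ⟨a', ha'⟩ := hker
      obtain ⟨a, rfl⟩ := hAsurj n hn a'
      have : fB n b - fB n b' = fB n (ι n a) := by rw [← hι, ha']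
      have hb : b - b' = ι n a := (hB n (by omega)).1 (by rw [map_sub, this])
      have : π n b - π n b' = 0 := by rw [← map_sub, hb, hπι]
      exact sub_eq_zero.mp this
    · -- fC surjective
      intro c'
      obtain ⟨b', hb'⟩ := hsurj (n + 1) c'
      obtain ⟨b, rfl⟩ := (hB n (by omega)).2 b'
      exact ⟨π n b, by rw [← hπ, hb']⟩
  · rintro ⟨⟨na, hA⟩, ⟨nc, hC⟩⟩
    refine ⟨max na nc, fun n hn => ⟨?_, ?_⟩⟩
    · -- fB injective
      intro b b' h
      have h1 : fC n (π n b) = fC n (π n b') := by rw [← hπ, ← hπ, h]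
      have h2 : π n b = π n b' := (hC n (le_trans (le_max_right _ _) hn)).1 h1
      have hker : b - b' ∈ LinearMap.ker (π n) := by
        rw [LinearMap.mem_ker, map_sub, h2, sub_self]
      rw [← hexact] at hker
      obtain ⟨a, ha⟩ := hker
      have h3 : ι (n + 1) (fA n a) = 0 := by
        rw [hι, ha, map_sub, h, sub_self]
      have h4 : fA n a = 0 := by
        apply hinj (n + 1)
        rw [h3, map_zero]
      have h5 : a = 0 := (hA n (le_trans (le_max_left _ _) hn)).1 (by rw [h4, map_zero])
      have : b - b' = 0 := by rw [← ha, h5, map_zero]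
      exact sub_eq_zero.mp this
    · -- fB surjective
      intro b'
      obtain ⟨c, hc⟩ := (hC n (le_trans (le_max_right _ _) hn)).2 (π (n + 1) b')
      obtain ⟨b, hb⟩ := hsurj n c
      have hker : b' - fB n b ∈ LinearMap.ker (π (n + 1)) := by
        rw [LinearMap.mem_ker, map_sub, hπ, hb, hc, sub_self]
      rw [← hexact] at hker
      obtain ⟨a', ha'⟩ := hker
      obtain ⟨a, rfl⟩ := (hA n (le_trans (le_max_left _ _) hn)).2 a'
      refine ⟨b + ι n a, ?_⟩
      rw [map_add, ← hι, ha']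
      abel
end
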